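/- Let 0 ≤ C₁ ≤ C₂ ≤ 1. Then ∫₀¹ (1 - min(C₁, C₂p))·min(C₁, C₂p) dp = C₁ - C₁² + (2C₁³/3 - C₁²/2)·(1/C₂), provided C₂ > 0. -/

import Mathlib

theorem direct_selling_revenue_integral (C₁ C₂ : ℝ)
    (h1 : 0 ≤ C₁) (h2 : C₁ ≤ C₂) (h3 : C₂ ≤ 1) (h4 : 0 < C₂) :
    ∫ p in (0 : ℝ)..1, (1 - min C₁ (C₂ * p)) * min C₁ (C₂ * p)
      = C₁ - C₁ ^ 2 + (2 * C₁ ^ 3 / 3 - C₁ ^ 2 / 2) * (1 / C₂) := by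
  set c := C₁ / C₂ with hcdef
  have hc0 : (0:ℝ) ≤ c := div_nonneg h1 h4.le
  have hc1 : c ≤ 1 := (div_le_one h4).mpr h2
  have hcc : C₂ * c = C₁ := by rw [hcdef]; field_simp [h4.ne']
  have hcont : Continuous fun p : ℝ => (1 - min C₁ (C₂ * p)) * min C₁ (C₂ * p) := by
    fun_prop
  have hsplit := intervalIntegral.integral_add_adjacent_intervals
    (hcont.intervalIntegrable (μ := MeasureTheory.volume) 0 c) (hcont.intervalIntegrable c 1)
  rw [← hsplit]
  have h₁ : (∫ p in (0:ℝ)..c, (1 - min C₁ (C₂ * p)) * min C₁ (C₂ * p))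
      = ∫ p in (0:ℝ)..c, (C₂ * p - C₂ ^ 2 * p ^ 2) := by
    apply intervalIntegral.integral_congr
    intro p hp
    rw [Set.uIcc_of_le hc0] at hp
    have hle : C₂ * p ≤ C₁ := by nlinarith [hp.1, hp.2]
    simp only [min_eq_right hle]; ring
  have h₂ : (∫ p in c..1, (1 - min C₁ (C₂ * p)) * min C₁ (C₂ * p))
      = ∫ p in c..1, ((1 - C₁) * C₁) := by
    apply intervalIntegral.integral_congr
    intro p hp
    rw [Set.uIcc_of_le hc1] at hp
    have hle : C₁ ≤ C₂ * p := by nlinarith [hp.1, hp.2]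
    simp only [min_eq_left hle]
  have hpoly : (∫ p in (0:ℝ)..c, (C₂ * p - C₂ ^ 2 * p ^ 2))
      = C₂ * c ^ 2 / 2 - C₂ ^ 2 * c ^ 3 / 3 := by
    have hi1 : IntervalIntegrable (fun p : ℝ => C₂ * p) MeasureTheory.volume 0 c := by
      apply Continuous.intervalIntegrable; continuity
    have hi2 : IntervalIntegrable (fun p : ℝ => C₂ ^ 2 * p ^ 2) MeasureTheory.volume 0 c := by
      apply Continuous.intervalIntegrable; continuity
    rw [intervalIntegral.integral_sub hi1 hi2,
      intervalIntegral.integral_const_mul, intervalIntegral.integral_const_mul,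
      integral_id, integral_pow]
    ring
  rw [h₁, h₂, hpoly, intervalIntegral.integral_const, smul_eq_mul]
  have h4' : C₂ ≠ 0 := h4.ne'
  rw [hcdef]; field_simp
  ring
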